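/- Let n, q be positive integers, let X be a real n × (q+1) matrix of rank q+1, let t_1,…,t_n ∈ (0,1), ζ_1,…,ζ_n > 0, p ∈ (1,2), and φ > 0. Define D^O = diag( t_i^{2−p}·ζ_i^{2−p} ) and D^R = diag( t_i·ζ_i^{2−p} ). Then the matrices XᵀD^O X and XᵀD^R X are positive definite (hence invertible), and the matrix M = φ·(XᵀD^R X)⁻¹ − φ·(XᵀD^O X)⁻¹ is positive definite. -/

import Mathlib

open Matrix Real

private lemma mulVec_inj_of_rank {n q : ℕ} (X : Matrix (Fin n) (Fin (q + 1)) ℝ)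
    (hX : X.rank = q + 1) : Function.Injective X.mulVec := by
  rw [show X.mulVec = X.mulVecLin from rfl, ← LinearMap.ker_eq_bot]
  have h := LinearMap.finrank_range_add_finrank_ker X.mulVecLin
  rw [Matrix.rank] at hX
  rw [hX] at h
  simp only [Module.finrank_pi, Fintype.card_fin] at h
  have hker : Module.finrank ℝ (LinearMap.ker X.mulVecLin) = 0 := by omega
  exact Submodule.finrank_eq_zero.mp hker

private lemma posDef_XTDX {m k : ℕ} {D : Matrix (Fin m) (Fin m) ℝ} (hD : D.PosDef)
    (X : Matrix (Fin m) (Fin k) ℝ) (hX : Function.Injective X.mulVec) :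
    (Xᵀ * D * X).PosDef := by
  have hDT : Dᵀ = D := by
    have := hD.1
    rwa [Matrix.IsHermitian, conjTranspose_eq_transpose_of_trivial] at this
  refine posDef_iff_dotProduct_mulVec.mpr ⟨?_, ?_⟩
  · rw [Matrix.IsHermitian, conjTranspose_eq_transpose_of_trivial]
    rw [Matrix.transpose_mul, Matrix.transpose_mul, transpose_transpose, hDT, Matrix.mul_assoc]
  · intro x hx
    have hXx : X *ᵥ x ≠ 0 := by
      intro h
      exact hx (hX (by simpa using h))
    have key : star x ⬝ᵥ (Xᵀ * D * X) *ᵥ x = star (X *ᵥ x) ⬝ᵥ D *ᵥ (X *ᵥ x) := by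
      simp only [star_trivial, ← mulVec_mulVec, dotProduct_mulVec, vecMul_transpose]
    rw [key]
    exact hD.dotProduct_mulVec_pos hXx

private lemma smul_posDef {k : ℕ} {M : Matrix (Fin k) (Fin k) ℝ} (hM : M.PosDef)
    {c : ℝ} (hc : 0 < c) : (c • M).PosDef := by
  refine posDef_iff_dotProduct_mulVec.mpr ⟨?_, ?_⟩
  · rw [Matrix.IsHermitian, conjTranspose_smul, star_trivial]
    rw [hM.1]
  · intro x hx
    rw [smul_mulVec, dotProduct_smul, smul_eq_mul]
    exact mul_pos hc (hM.dotProduct_mulVec_pos hx)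

private lemma inv_sub_inv_posDef {k : ℕ} {A B : Matrix (Fin k) (Fin k) ℝ}
    (hA : A.PosDef) (hB : B.PosDef) (hAB : (A - B).PosDef) :
    (B⁻¹ - A⁻¹).PosDef := by
  have hAT : Aᵀ = A := by
    have := hA.1; rwa [Matrix.IsHermitian, conjTranspose_eq_transpose_of_trivial] at this
  have hBT : Bᵀ = B := by
    have := hB.1; rwa [Matrix.IsHermitian, conjTranspose_eq_transpose_of_trivial] at this
  haveI := hA.isUnit.invertible
  haveI := hB.isUnit.invertible
  refine posDef_iff_dotProduct_mulVec.mpr ⟨?_, ?_⟩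
  · exact hB.inv.1.sub hA.inv.1
  · intro x hx
    set u : Fin k → ℝ := A⁻¹ *ᵥ x with hu_def
    have hxu : A *ᵥ u = x := by
      rw [hu_def, mulVec_mulVec, Matrix.mul_inv_of_invertible, one_mulVec]
    have hu : u ≠ 0 := by
      intro h
      apply hx
      rw [← hxu, h, mulVec_zero]
    set a : ℝ := u ⬝ᵥ A *ᵥ u with ha_def
    set b : ℝ := u ⬝ᵥ B *ᵥ u with hb_def
    set c : ℝ := x ⬝ᵥ B⁻¹ *ᵥ x with hc_def
    -- x ⬝ᵥ A⁻¹ *ᵥ x = a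
    have hAinv : x ⬝ᵥ A⁻¹ *ᵥ x = a := by
      rw [← hu_def, dotProduct_comm, ← hxu]
    -- expansion: 0 ≤ c - 2a + b
    have hBu_dot : ∀ w : Fin k → ℝ, (B *ᵥ u) ⬝ᵥ w = u ⬝ᵥ B *ᵥ w := by
      intro w
      rw [← vecMul_transpose, hBT, ← dotProduct_mulVec]
    have hBinvBu : B⁻¹ *ᵥ (B *ᵥ u) = u := by
      rw [mulVec_mulVec, Matrix.inv_mul_of_invertible, one_mulVec]
    have hBBinvx : B *ᵥ (B⁻¹ *ᵥ x) = x := by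
      rw [mulVec_mulVec, Matrix.mul_inv_of_invertible, one_mulVec]
    have hux : u ⬝ᵥ x = a := by rw [← hxu, ha_def]
    have hexp : (x - B *ᵥ u) ⬝ᵥ B⁻¹ *ᵥ (x - B *ᵥ u) = c - 2 * a + b := by
      rw [mulVec_sub, sub_dotProduct, dotProduct_sub, dotProduct_sub]
      rw [hBinvBu, hBu_dot (B⁻¹ *ᵥ x), hBBinvx, hux]
      have h1 : x ⬝ᵥ u = a := by rw [dotProduct_comm, hux]
      have h2 : (B *ᵥ u) ⬝ᵥ u = b := by
        rw [← vecMul_transpose, hBT, ← dotProduct_mulVec, hb_def]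
      rw [h1, h2, ← hc_def]
      ring
    have hnonneg : 0 ≤ (x - B *ᵥ u) ⬝ᵥ B⁻¹ *ᵥ (x - B *ᵥ u) := by
      have := hB.inv.posSemidef.dotProduct_mulVec_nonneg (x - B *ᵥ u)
      simpa using this
    have hpos : 0 < a - b := by
      have := hAB.dotProduct_mulVec_pos hu
      simp only [star_trivial, sub_mulVec, dotProduct_sub] at this
      linarith [this]
    have hkey : 0 < c - a := by
      rw [hexp] at hnonneg
      linarith
    have : star x ⬝ᵥ (B⁻¹ - A⁻¹) *ᵥ x = c - a := by
      simp only [star_trivial, sub_mulVec, dotProduct_sub, ← hc_def, hAinv]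
    rw [this]
    exact hkey

/-- The offset and ratio Fisher information cores `XᵀD^O X`, `XᵀD^R X` are
positive definite, and the difference of the asymptotic covariance matrices
`M = φ(XᵀD^R X)⁻¹ − φ(XᵀD^O X)⁻¹` is positive definite. -/
theorem covariance_diff_posDef
    (n q : ℕ) (hn : 0 < n) (hq : 0 < q)
    (X : Matrix (Fin n) (Fin (q + 1)) ℝ) (hX : X.rank = q + 1)
    (t ζ : Fin n → ℝ)
    (ht0 : ∀ i, 0 < t i) (ht1 : ∀ i, t i < 1)
    (hζ : ∀ i, 0 < ζ i)
    (p : ℝ) (hp1 : 1 < p) (hp2 : p < 2)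
    (φ : ℝ) (hφ : 0 < φ)
    (DO DR : Matrix (Fin n) (Fin n) ℝ)
    (hDO : DO = Matrix.diagonal (fun i => t i ^ (2 - p) * ζ i ^ (2 - p)))
    (hDR : DR = Matrix.diagonal (fun i => t i * ζ i ^ (2 - p))) :
    (Xᵀ * DO * X).PosDef ∧ (Xᵀ * DR * X).PosDef ∧
    (φ • (Xᵀ * DR * X)⁻¹ - φ • (Xᵀ * DO * X)⁻¹).PosDef := by
  have hinj := mulVec_inj_of_rank X hX
  have hζp : ∀ i, (0:ℝ) < ζ i ^ (2 - p) := fun i => Real.rpow_pos_of_pos (hζ i) _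
  have hDOpd : DO.PosDef := by
    rw [hDO]
    exact Matrix.PosDef.diagonal fun i =>
      mul_pos (Real.rpow_pos_of_pos (ht0 i) _) (hζp i)
  have hDRpd : DR.PosDef := by
    rw [hDR]
    exact Matrix.PosDef.diagonal fun i => mul_pos (ht0 i) (hζp i)
  have hA : (Xᵀ * DO * X).PosDef := posDef_XTDX hDOpd X hinj
  have hB : (Xᵀ * DR * X).PosDef := posDef_XTDX hDRpd X hinj
  refine ⟨hA, hB, ?_⟩
  have hdiff : (DO - DR).PosDef := by
    rw [hDO, hDR, Matrix.diagonal_sub]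
    refine Matrix.PosDef.diagonal fun i => ?_
    have htlt : t i < t i ^ (2 - p) := by
      have := Real.rpow_lt_rpow_of_exponent_gt (ht0 i) (ht1 i) (by linarith : 2 - p < 1)
      rwa [Real.rpow_one] at this
    show (0:ℝ) < t i ^ (2 - p) * ζ i ^ (2 - p) - t i * ζ i ^ (2 - p)
    nlinarith [hζp i]
  have hAB : ((Xᵀ * DO * X) - (Xᵀ * DR * X)).PosDef := by
    have heq : (Xᵀ * DO * X) - (Xᵀ * DR * X) = Xᵀ * (DO - DR) * X := by
      rw [Matrix.mul_sub, Matrix.sub_mul]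
    rw [heq]
    exact posDef_XTDX hdiff X hinj
  have hsub := inv_sub_inv_posDef hA hB hAB
  have : φ • (Xᵀ * DR * X)⁻¹ - φ • (Xᵀ * DO * X)⁻¹
      = φ • ((Xᵀ * DR * X)⁻¹ - (Xᵀ * DO * X)⁻¹) := by
    rw [smul_sub]
  rw [this]
  exact smul_posDef hsub hφ
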